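/- Let H be a hypergraph, S, B ⊆ V(H), and let C_1, …, C_k be the connected components of the induced hypergraph H[S]. For each i ∈ {1, …, k}, let H_i := {e ∈ H | e ∩ S ∈ C_i}. Then btr_B(H, S) = ⊗_{i=1}^k btr_B(H_i, S). -/

import Mathlib

variable {α : Type*} [DecidableEq α]

/-- The vertex set `V(H)` of a hypergraph `H`: the union of its hyperedges. -/
def verts (H : Finset (Finset α)) : Finset α := H.sup id

/-- `H(S)`: the set of hyperedges of `H` meeting `S`. -/
def edgesMeeting (H : Finset (Finset α)) (S : Finset α) : Finset (Finset α) :=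
  H.filter fun e => (e ∩ S).Nonempty

/-- `T` is a transversal of `H`: `T ⊆ V(H)` and `T` meets every hyperedge. -/
def IsTransversal (H : Finset (Finset α)) (T : Finset α) : Prop :=
  T ⊆ verts H ∧ ∀ e ∈ H, (T ∩ e).Nonempty

/-- `tr H`: the set of transversals of `H`. -/
def tr (H : Finset (Finset α)) : Finset (Finset α) :=
  (verts H).powerset.filter fun T => ∀ e ∈ H, (T ∩ e).Nonempty

/-- `mtr H`: the set of minimal transversals of `H`. -/
def mtr (H : Finset (Finset α)) : Finset (Finset α) :=
  (tr H).filter fun T => ∀ x ∈ T, T.erase x ∉ tr H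

/-- `T` is a `B`-blocked transversal of `H'`: a transversal of `H'` such that every `x ∈ T`
has a private hyperedge in `H' \ H'(B)`. -/
def IsBlockedTr (B : Finset α) (H' : Finset (Finset α)) (T : Finset α) : Prop :=
  IsTransversal H' T ∧ ∀ x ∈ T, ∃ e ∈ H' \ edgesMeeting H' B, e ∩ T = {x}

/-- `btr_B(H')`: the set of `B`-blocked transversals of `H'`. -/
def btr (B : Finset α) (H' : Finset (Finset α)) : Finset (Finset α) :=
  (tr H').filter fun T => ∀ x ∈ T, ∃ e ∈ H' \ edgesMeeting H' B, e ∩ T = {x}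

/-- `btr_B(H', S)`: the `B`-blocked transversals of `H'` included in `S`. -/
def btrS (B : Finset α) (H' : Finset (Finset α)) (S : Finset α) : Finset (Finset α) :=
  (btr B H').filter fun T => T ⊆ S

/-- Two hyperedges are connected by a walk in `H`. -/
def Hconn (H : Finset (Finset α)) (e f : Finset α) : Prop :=
  Relation.ReflTransGen (fun a b => a ∈ H ∧ b ∈ H ∧ (a ∩ b).Nonempty) e f

/-- `C` is a connected component of `H`: a maximal (nonempty) set of hyperedges of `H`
pairwise connected by walks. -/
def IsConnComp (H C : Finset (Finset α)) : Prop :=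
  C ⊆ H ∧ C.Nonempty ∧ (∀ e ∈ C, ∀ f ∈ C, Hconn H e f) ∧
    ∀ D : Finset (Finset α), D ⊆ H → C ⊆ D → (∀ e ∈ D, ∀ f ∈ D, Hconn H e f) → D = C

/-- `H[S]`: the hypergraph induced by `S`. -/
def induce (H : Finset (Finset α)) (S : Finset α) : Finset (Finset α) :=
  H.image fun e => e ∩ S

lemma hconn_symm (H : Finset (Finset α)) : Symmetric (Hconn H) := by
  have hsym : Symmetric (fun a b : Finset α => a ∈ H ∧ b ∈ H ∧ (a ∩ b).Nonempty) := by
    rintro a b ⟨ha, hb, hab⟩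
    exact ⟨hb, ha, by rwa [Finset.inter_comm]⟩
  haveI : Std.Symm (fun a b : Finset α => a ∈ H ∧ b ∈ H ∧ (a ∩ b).Nonempty) := ⟨fun a b h => hsym h⟩
  exact fun a b h => Relation.ReflTransGen.symmetric.symm a b h

lemma mem_verts {H' : Finset (Finset α)} {x : α} : x ∈ verts H' ↔ ∃ e ∈ H', x ∈ e := by
  simp [verts, Finset.mem_sup]

lemma mem_btrS {B : Finset α} {H' : Finset (Finset α)} {S T : Finset α} :
    T ∈ btrS B H' S ↔ (T ⊆ verts H' ∧ ∀ e ∈ H', (T ∩ e).Nonempty) ∧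
      (∀ x ∈ T, ∃ e ∈ H' \ edgesMeeting H' B, e ∩ T = {x}) ∧ T ⊆ S := by
  simp [btrS, btr, tr, Finset.mem_filter, Finset.mem_powerset, and_assoc]

lemma mem_sdiff_edgesMeeting {H' : Finset (Finset α)} {B e : Finset α} :
    e ∈ H' \ edgesMeeting H' B ↔ e ∈ H' ∧ e ∩ B = ∅ := by
  simp only [Finset.mem_sdiff, edgesMeeting, Finset.mem_filter,
    Finset.nonempty_iff_ne_empty]
  tauto

/-- **Lemma 4.** Let `C_1, …, C_k` be the connected components of `H[S]` and, for each `i`,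
`H_i := {e ∈ H | e ∩ S ∈ C_i}`. Then `btr_B(H, S) = ⊗_{i=1}^k btr_B(H_i, S)`, where the
`k`-fold product `⊗` is empty if one factor is empty, and otherwise consists of all
unions `T_1 ∪ ⋯ ∪ T_k` with `T_i` in the `i`-th factor. -/
theorem btrS_eq_otimes_components (H : Finset (Finset α)) (S B : Finset α)
    (hS : S ⊆ verts H) (hB : B ⊆ verts H) (k : ℕ) (C : Fin k → Finset (Finset α))
    (hcomp : ∀ i, IsConnComp (induce H S) (C i)) (hinj : Function.Injective C)
    (hall : ∀ D, IsConnComp (induce H S) D → ∃ i, C i = D) :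
    (↑(btrS B H S) : Set (Finset α)) =
      {T | ∃ f : Fin k → Finset α,
        (∀ i, f i ∈ btrS B (H.filter fun e => e ∩ S ∈ C i) S) ∧ T = Finset.univ.sup f} := by
  classical
  set I := induce H S with hIdef
  have hCsub : ∀ i, C i ⊆ I := fun i => (hcomp i).1
  have hconn_of : ∀ i, ∀ e ∈ C i, ∀ f ∈ C i, Hconn I e f := fun i => (hcomp i).2.2.1
  have hmax : ∀ i, ∀ D : Finset (Finset α), D ⊆ I → C i ⊆ D →
      (∀ e ∈ D, ∀ f ∈ D, Hconn I e f) → D = C i := fun i => (hcomp i).2.2.2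
  -- an edge in two components forces equality of indices
  have hedge_disj : ∀ i j, ∀ g, g ∈ C i → g ∈ C j → i = j := by
    intro i j g hgi hgj
    apply hinj
    have hDconn : ∀ e ∈ C i ∪ C j, ∀ f ∈ C i ∪ C j, Hconn I e f := by
      intro e he f hf
      have h1 : Hconn I e g := by
        rcases Finset.mem_union.1 he with h | h
        · exact hconn_of i e h g hgi
        · exact hconn_of j e h g hgj
      have h2 : Hconn I g f := by
        rcases Finset.mem_union.1 hf with h | h
        · exact hconn_of i g hgi f h
        · exact hconn_of j g hgj f h
      exact h1.trans h2
    have hsubI : C i ∪ C j ⊆ I := Finset.union_subset (hCsub i) (hCsub j)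
    have h1 := hmax i (C i ∪ C j) hsubI Finset.subset_union_left hDconn
    have h2 := hmax j (C i ∪ C j) hsubI Finset.subset_union_right hDconn
    exact h1.symm.trans h2
  -- an edge of I adjacent to an edge of C i lies in C i
  have habsorb : ∀ i, ∀ g ∈ C i, ∀ h ∈ I, (g ∩ h).Nonempty → h ∈ C i := by
    intro i g hg h hhI hgh
    have step : Hconn I g h := Relation.ReflTransGen.single ⟨hCsub i hg, hhI, hgh⟩
    have conn_to_g : ∀ e ∈ insert h (C i), Hconn I g e := by
      intro e he
      rcases Finset.mem_insert.1 he with rfl | he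
      · exact step
      · exact hconn_of i g hg e he
    have hDconn : ∀ e ∈ insert h (C i), ∀ f ∈ insert h (C i), Hconn I e f := by
      intro e he f hf
      exact (hconn_symm I (conn_to_g e he)).trans (conn_to_g f hf)
    have heq := hmax i (insert h (C i)) (Finset.insert_subset hhI (hCsub i))
      (Finset.subset_insert _ _) hDconn
    rw [← heq]; exact Finset.mem_insert_self _ _
  -- vertex disjointness of components
  have hvert : ∀ i j, ∀ x : α, ∀ g h : Finset α, g ∈ C i → h ∈ C j → x ∈ g → x ∈ h →
      i = j := by
    intro i j x g h hgi hhj hxg hxh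
    have : h ∈ C i := habsorb i g hgi h (hCsub j hhj) ⟨x, Finset.mem_inter.2 ⟨hxg, hxh⟩⟩
    exact hedge_disj i j h this hhj
  -- every edge of I lies in some component
  have hcover : ∀ g ∈ I, ∃ i, g ∈ C i := by
    intro g hg
    set D := I.filter (fun h => Hconn I g h) with hD
    have hgD : g ∈ D := Finset.mem_filter.2 ⟨hg, Relation.ReflTransGen.refl⟩
    have hDcomp : IsConnComp I D := by
      refine ⟨Finset.filter_subset _ _, ⟨g, hgD⟩, ?_, ?_⟩
      · intro e he f hf
        exact (hconn_symm I (Finset.mem_filter.1 he).2).trans (Finset.mem_filter.1 hf).2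
      · intro D' hD'I hDD' hD'conn
        apply Finset.Subset.antisymm
        · intro h hh
          exact Finset.mem_filter.2 ⟨hD'I hh, hD'conn g (hDD' hgD) h hh⟩
        · exact hDD'
    obtain ⟨i, hi⟩ := hall D hDcomp
    exact ⟨i, by rw [hi]; exact hgD⟩
  -- vertex set of component i
  set V : Fin k → Finset α := fun i => (C i).sup id with hV
  have memV : ∀ i (x : α), x ∈ V i ↔ ∃ g ∈ C i, x ∈ g := by
    intro i x; simp [hV, Finset.mem_sup]
  -- a vertex of S in an edge of H whose trace is in C i lies in V i
  have hxV : ∀ i (x : α) (e : Finset α), e ∈ H → e ∩ S ∈ C i → x ∈ e → x ∈ S → x ∈ V i := by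
    intro i x e _ heC hxe hxS
    exact (memV i x).2 ⟨e ∩ S, heC, Finset.mem_inter.2 ⟨hxe, hxS⟩⟩
  -- V i are pairwise disjoint (index-wise)
  have hVdisj : ∀ i j (x : α), x ∈ V i → x ∈ V j → i = j := by
    intro i j x hxi hxj
    obtain ⟨g, hg, hxg⟩ := (memV i x).1 hxi
    obtain ⟨h, hh, hxh⟩ := (memV j x).1 hxj
    exact hvert i j x g h hg hh hxg hxh
  ext T
  simp only [Finset.mem_coe, Set.mem_setOf_eq]
  constructor
  · intro hT
    obtain ⟨⟨hTv, hTtr⟩, hTpriv, hTS⟩ := mem_btrS.1 hT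
    refine ⟨fun i => T ∩ V i, ?_, ?_⟩
    · intro i
      refine mem_btrS.2 ⟨⟨?_, ?_⟩, ?_, fun x hx => hTS (Finset.mem_inter.1 hx).1⟩
      · intro x hx
        obtain ⟨hxT, hxV'⟩ := Finset.mem_inter.1 hx
        obtain ⟨g, hg, hxg⟩ := (memV i x).1 hxV'
        obtain ⟨e, heH, hegS⟩ := Finset.mem_image.1 (hCsub i hg)
        refine mem_verts.2 ⟨e, Finset.mem_filter.2 ⟨heH, by rwa [hegS]⟩, ?_⟩
        have : x ∈ e ∩ S := hegS ▸ hxg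
        exact (Finset.mem_inter.1 this).1
      · intro e he
        obtain ⟨heH, heC⟩ := Finset.mem_filter.1 he
        obtain ⟨x, hx⟩ := hTtr e heH
        obtain ⟨hxT, hxe⟩ := Finset.mem_inter.1 hx
        exact ⟨x, Finset.mem_inter.2 ⟨Finset.mem_inter.2 ⟨hxT, hxV i x e heH heC hxe (hTS hxT)⟩,
          hxe⟩⟩
      · intro x hx
        obtain ⟨hxT, hxVi⟩ := Finset.mem_inter.1 hx
        obtain ⟨e, hesd, heT⟩ := hTpriv x hxT
        obtain ⟨heH, heB⟩ := mem_sdiff_edgesMeeting.1 hesd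
        have hxe : x ∈ e := by
          have : x ∈ e ∩ T := heT ▸ Finset.mem_singleton_self x
          exact (Finset.mem_inter.1 this).1
        obtain ⟨j, hj⟩ := hcover (e ∩ S) (Finset.mem_image_of_mem _ heH)
        have hij : i = j := hVdisj i j x hxVi (hxV j x e heH hj hxe (hTS hxT))
        subst hij
        refine ⟨e, mem_sdiff_edgesMeeting.2 ⟨Finset.mem_filter.2 ⟨heH, hj⟩, heB⟩, ?_⟩
        rw [← Finset.inter_assoc, heT, Finset.singleton_inter_of_mem hxVi]
    · apply Finset.Subset.antisymm
      · intro x hxT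
        obtain ⟨e, heH, hxe⟩ := mem_verts.1 (hTv hxT)
        obtain ⟨i, hi⟩ := hcover (e ∩ S) (Finset.mem_image_of_mem _ heH)
        exact Finset.mem_sup.2 ⟨i, Finset.mem_univ i,
          Finset.mem_inter.2 ⟨hxT, hxV i x e heH hi hxe (hTS hxT)⟩⟩
      · intro x hx
        obtain ⟨i, _, hxi⟩ := Finset.mem_sup.1 hx
        exact (Finset.mem_inter.1 hxi).1
  · rintro ⟨f, hf, rfl⟩
    have hfS : ∀ i, f i ⊆ S := fun i => ((mem_btrS.1 (hf i)).2).2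
    have hfV : ∀ i, f i ⊆ V i := by
      intro i x hx
      obtain ⟨e, heHi, hxe⟩ := mem_verts.1 (((mem_btrS.1 (hf i)).1).1 hx)
      obtain ⟨heH, heC⟩ := Finset.mem_filter.1 heHi
      exact hxV i x e heH heC hxe (hfS i hx)
    have hfT : ∀ i, f i ⊆ Finset.univ.sup f :=
      fun i x hx => Finset.mem_sup.2 ⟨i, Finset.mem_univ i, hx⟩
    refine mem_btrS.2 ⟨⟨?_, ?_⟩, ?_, ?_⟩
    · intro x hx
      obtain ⟨i, _, hx⟩ := Finset.mem_sup.1 hx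
      obtain ⟨e, heHi, hxe⟩ := mem_verts.1 (((mem_btrS.1 (hf i)).1).1 hx)
      exact mem_verts.2 ⟨e, (Finset.filter_subset _ _) heHi, hxe⟩
    · intro e heH
      obtain ⟨i, hi⟩ := hcover (e ∩ S) (Finset.mem_image_of_mem _ heH)
      obtain ⟨x, hx⟩ := ((mem_btrS.1 (hf i)).1).2 e (Finset.mem_filter.2 ⟨heH, hi⟩)
      obtain ⟨hxf, hxe⟩ := Finset.mem_inter.1 hx
      exact ⟨x, Finset.mem_inter.2 ⟨hfT i hxf, hxe⟩⟩
    · intro x hx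
      obtain ⟨i, _, hxi⟩ := Finset.mem_sup.1 hx
      obtain ⟨e, hesd, heT⟩ := ((mem_btrS.1 (hf i)).2).1 x hxi
      obtain ⟨heHi, heB⟩ := mem_sdiff_edgesMeeting.1 hesd
      obtain ⟨heH, heC⟩ := Finset.mem_filter.1 heHi
      have hxe : x ∈ e := by
        have : x ∈ e ∩ f i := heT ▸ Finset.mem_singleton_self x
        exact (Finset.mem_inter.1 this).1
      refine ⟨e, mem_sdiff_edgesMeeting.2 ⟨heH, heB⟩, ?_⟩
      apply Finset.Subset.antisymm
      · intro y hy
        obtain ⟨hye, hyT⟩ := Finset.mem_inter.1 hy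
        obtain ⟨j, _, hyj⟩ := Finset.mem_sup.1 hyT
        have hji : j = i := by
          refine hVdisj j i y (hfV j hyj) ?_
          exact hxV i y e heH heC hye (hfS j hyj)
        subst hji
        have : y ∈ e ∩ f j := Finset.mem_inter.2 ⟨hye, hyj⟩
        rwa [heT] at this
      · intro y hy
        rw [Finset.mem_singleton] at hy
        subst hy
        exact Finset.mem_inter.2 ⟨hxe, hfT i hxi⟩
    · intro x hx
      obtain ⟨i, _, hx⟩ := Finset.mem_sup.1 hx
      exact hfS i hx
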